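/- Let X be a locally compact Hausdorff space, let φ : ℂ × ℂ → [0,∞) be a continuous map satisfying (inc) and satisfying φ(t,0) = 0 = φ(0,t) for all real t ≥ 0, let A be a subset of C₀(X), let x₀ be a strong boundary point of A, let f ∈ A and ε > 0. Then there exists h ∈ V_{x₀}(A) such that ρ₊(f,h) < ρ₊(|f(x₀)| + ε, 1) = φ(|f(x₀)|+ε, 1) + φ(1, |f(x₀)|+ε). -/

import Mathlib

open scoped ZeroAtInfty Pointwise
open Filter Topology

set_option maxHeartbeats 1000000
set_option synthInstance.maxHeartbeats 1000000

/-- The (inc) property for a two-variable function `φ : ℂ → ℂ → ℝ`. -/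
def IncProp (φ : ℂ → ℂ → ℝ) : Prop :=
  (∀ s₁ s₂ t : ℂ, ‖s₁‖ ≤ ‖s₂‖ →
      φ s₁ t ≤ φ s₂ t ∧ φ t s₁ ≤ φ t s₂) ∧
  (∀ s₁ s₂ t : ℂ, ‖s₁‖ < ‖s₂‖ → t ≠ 0 →
      φ s₁ t < φ s₂ t ∧ φ t s₁ < φ t s₂)

/-- The (con) property. -/
def ConProp (φ : ℂ → ℂ → ℝ) : Prop :=
  ∀ (n : ℕ), 0 < n → ∀ (s : Fin n → ℂ) (t : ℂ),
    φ ((1 / (n : ℂ)) * ∑ i, s i) t ≤ (1 / (n : ℝ)) * ∑ i, φ (s i) t ∧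
    φ t ((1 / (n : ℂ)) * ∑ i, s i) ≤ (1 / (n : ℝ)) * ∑ i, φ t (s i)

/-- sup of φ(f,g) over the space (the supremum norm of the nonnegative function φ(f,g)). -/
noncomputable def supPhi {X : Type*} (φ : ℂ → ℂ → ℝ) (f g : X → ℂ) : ℝ :=
  ⨆ x, φ (f x) (g x)

noncomputable def rhoPlus {X : Type*} (φ : ℂ → ℂ → ℝ) (f g : X → ℂ) : ℝ :=
  supPhi φ f g + supPhi φ g f

noncomputable def rhoMax {X : Type*} (φ : ℂ → ℂ → ℝ) (f g : X → ℂ) : ℝ :=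
  max (supPhi φ f g) (supPhi φ g f)

noncomputable def rhoPlusScalar (φ : ℂ → ℂ → ℝ) (r s : ℂ) : ℝ := φ r s + φ s r

noncomputable def rhoMaxScalar (φ : ℂ → ℂ → ℝ) (r s : ℂ) : ℝ := max (φ r s) (φ s r)

/-- Generic ρ, with a Boolean selecting between ρ₊ (true) and ρ_max (false). -/
noncomputable def rhoGen {X : Type*} (c : Bool) (φ : ℂ → ℂ → ℝ) (f g : X → ℂ) : ℝ :=
  if c then rhoPlus φ f g else rhoMax φ f g

noncomputable def rhoGenScalar (c : Bool) (φ : ℂ → ℂ → ℝ) (r s : ℂ) : ℝ :=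
  if c then rhoPlusScalar φ r s else rhoMaxScalar φ r s

/-- `x₀` is a strong boundary point of `A ⊆ C₀(X)`. -/
def IsStrongBoundaryPoint {X : Type*} [TopologicalSpace X]
    (A : Set C₀(X, ℂ)) (x₀ : X) : Prop :=
  ∀ ε > (0 : ℝ), ∀ V ∈ 𝓝 x₀, ∃ f ∈ A, f x₀ = 1 ∧ ‖f‖ = 1 ∧
    ∀ x ∉ V, ‖f x‖ < ε

/-- V_{x₀}(A). -/
def Vset {X : Type*} [TopologicalSpace X] (A : Set C₀(X, ℂ)) (x₀ : X) : Set C₀(X, ℂ) :=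
  {f ∈ A | f x₀ = 1 ∧ ‖f‖ = 1}

/-- F_{x₀}(A). -/
def Fset {X : Type*} [TopologicalSpace X] (A : Set C₀(X, ℂ)) (x₀ : X) : Set C₀(X, ℂ) :=
  {f ∈ A | ‖f x₀‖ = 1 ∧ ‖f‖ = 1}

/-- The maximum modulus set M(f). -/
def maxSet {X : Type*} [TopologicalSpace X] (f : C₀(X, ℂ)) : Set X :=
  {x | ‖f x‖ = ‖f‖}

abbrev NormedSpace.Dual (𝕜 : Type*) [NontriviallyNormedField 𝕜] (E : Type*)
    [SeminormedAddCommGroup E] [NormedSpace 𝕜 E] : Type _ := E →L[𝕜] 𝕜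

/-- Evaluation at a point, as a continuous linear functional on a subspace of C₀(X). -/
noncomputable def evalDual {X : Type*} [TopologicalSpace X]
    (𝒜 : Submodule ℂ C₀(X, ℂ)) (x : X) : NormedSpace.Dual ℂ 𝒜 :=
  LinearMap.mkContinuous
    { toFun := fun f => (f : C₀(X, ℂ)) x
      map_add' := fun f g => rfl
      map_smul' := fun c f => rfl }
    1
    (fun f => by
      rw [one_mul, ← Submodule.norm_coe]
      exact ((f : C₀(X, ℂ)).toBCF.norm_coe_le_norm x).trans_eq
        ZeroAtInftyContinuousMap.norm_toBCF_eq_norm)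

/-- `x` lies in the Choquet boundary of a subspace `𝒜` of `C₀(X)`: the evaluation functional is
an extreme point of the closed unit ball of the dual space. -/
def InChoquetBoundary {X : Type*} [TopologicalSpace X]
    (𝒜 : Submodule ℂ C₀(X, ℂ)) (x : X) : Prop :=
  evalDual 𝒜 x ∈
    Set.extremePoints ℝ (Metric.closedBall (0 : NormedSpace.Dual ℂ 𝒜) 1)

/-- A function algebra on `X`: a closed subalgebra of `C₀(X)` strongly separating points. -/
def IsFunctionAlgebra {X : Type*} [TopologicalSpace X]
    (𝒜 : NonUnitalSubalgebra ℂ C₀(X, ℂ)) : Prop :=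
  IsClosed (𝒜 : Set C₀(X, ℂ)) ∧
  (∀ x y : X, x ≠ y → ∃ f ∈ 𝒜, f x ≠ f y) ∧
  (∀ x : X, ∃ g ∈ 𝒜, g x ≠ (0 : ℂ))

/-- `|A| ⊆ |𝒜|`. -/
def ModulusSubset {X : Type*} [TopologicalSpace X]
    (A 𝒜 : Set C₀(X, ℂ)) : Prop :=
  ∀ f ∈ A, ∃ g ∈ 𝒜, ∀ x, ‖f x‖ = ‖g x‖

/-- The positive elements of a subset `S` of `C₀(X)`. -/
def posPart {X : Type*} [TopologicalSpace X] (S : Set C₀(X, ℂ)) : Set C₀(X, ℂ) :=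
  {f ∈ S | ∀ x, ∃ r : ℝ, 0 ≤ r ∧ f x = r}

theorem stmt5 {X : Type*} [TopologicalSpace X] [LocallyCompactSpace X] [T2Space X]
    (φ : ℂ → ℂ → ℝ) (hφc : Continuous fun p : ℂ × ℂ => φ p.1 p.2)
    (hφ0 : ∀ s t : ℂ, 0 ≤ φ s t) (hinc : IncProp φ)
    (hφz : ∀ t : ℝ, 0 ≤ t → φ (t : ℂ) 0 = 0 ∧ φ 0 (t : ℂ) = 0)
    (A : Set C₀(X, ℂ)) (x₀ : X) (hx₀ : IsStrongBoundaryPoint A x₀)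
    (f : C₀(X, ℂ)) (hf : f ∈ A) (ε : ℝ) (hε : 0 < ε) :
    ∃ h ∈ Vset A x₀,
      rhoPlus φ (fun x => f x) (fun x => h x) <
        rhoPlusScalar φ ((‖f x₀‖ + ε : ℝ) : ℂ) 1 := by
  classical
  set a : ℝ := ‖f x₀‖ with ha
  have ha0 : 0 ≤ a := norm_nonneg _
  set c' : ℝ := a + ε / 2 with hc'def
  have hc'pos : 0 < c' := by positivity
  have hc'lt : c' < a + ε := by simp only [hc'def]; linarith
  have habsc' : ‖((c' : ℝ) : ℂ)‖ = c' := by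
    rw [Complex.norm_real, Real.norm_eq_abs, abs_of_pos hc'pos]
  have habsc : ‖(((a + ε : ℝ)) : ℂ)‖ = a + ε := by
    rw [Complex.norm_real, Real.norm_eq_abs, abs_of_pos (by positivity)]
  -- the neighborhood V
  set V : Set X := {x | ‖f x‖ < c'} with hVdef
  have hVmem : V ∈ 𝓝 x₀ := by
    have hVopen : IsOpen V :=
      isOpen_lt (continuous_norm.comp f.continuous) continuous_const
    exact hVopen.mem_nhds (by simp only [hVdef, Set.mem_setOf_eq, ← ha, hc'def]; linarith)
  -- positivity of the target values
  have hpos1 : 0 < φ ((c' : ℝ) : ℂ) 1 := by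
    refine lt_of_le_of_lt (hφ0 0 1) ?_
    refine (hinc.2 0 ((c' : ℝ) : ℂ) 1 ?_ one_ne_zero).1
    simpa [habsc'] using hc'pos.ne'
  have hpos2 : 0 < φ 1 ((c' : ℝ) : ℂ) := by
    refine lt_of_le_of_lt (hφ0 1 0) ?_
    refine (hinc.2 0 ((c' : ℝ) : ℂ) 1 ?_ one_ne_zero).2
    simpa [habsc'] using hc'pos.ne'
  set m : ℝ := min (φ ((c' : ℝ) : ℂ) 1) (φ 1 ((c' : ℝ) : ℂ)) with hmdef
  have hm : 0 < m := lt_min hpos1 hpos2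
  -- choose δ using continuity at 0
  set g : ℝ → ℝ := fun t => max (φ ((‖f‖ : ℝ) : ℂ) ((t : ℝ) : ℂ)) (φ ((t : ℝ) : ℂ) ((‖f‖ : ℝ) : ℂ)) with hgdef
  have hgc : Continuous g := by
    have h1 : Continuous fun t : ℝ => φ ((‖f‖ : ℝ) : ℂ) ((t : ℝ) : ℂ) :=
      hφc.comp (continuous_const.prodMk (Complex.continuous_ofReal))
    have h2 : Continuous fun t : ℝ => φ ((t : ℝ) : ℂ) ((‖f‖ : ℝ) : ℂ) :=
      hφc.comp ((Complex.continuous_ofReal).prodMk continuous_const)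
    exact h1.max h2
  have hg0 : g 0 = 0 := by
    have := hφz ‖f‖ (norm_nonneg f)
    simp [hgdef, this.1, this.2]
  obtain ⟨δ, hδpos, hδ⟩ := Metric.continuousAt_iff.mp hgc.continuousAt m hm
  have hδ2pos : 0 < δ / 2 := by linarith
  have hgδ : g (δ / 2) < m := by
    have hdist : dist (δ / 2) 0 < δ := by
      rw [Real.dist_eq, sub_zero, abs_of_pos hδ2pos]; linarith
    have := hδ hdist
    rw [Real.dist_eq, hg0, sub_zero] at this
    calc g (δ / 2) ≤ |g (δ / 2)| := le_abs_self _
      _ < m := this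
  -- strong boundary point
  obtain ⟨h, hhA, hhx₀, hhnorm, hhsmall⟩ := hx₀ (δ / 2) hδ2pos V hVmem
  refine ⟨h, ⟨hhA, hhx₀, hhnorm⟩, ?_⟩
  -- pointwise bounds
  have habsf : ∀ x, ‖f x‖ ≤ ‖((‖f‖ : ℝ) : ℂ)‖ := by
    intro x
    rw [Complex.norm_real, Real.norm_eq_abs, abs_of_nonneg (norm_nonneg f)]
    exact (f.toBCF.norm_coe_le_norm x).trans_eq
      ZeroAtInftyContinuousMap.norm_toBCF_eq_norm
  have habsh : ∀ x, ‖h x‖ ≤ 1 := by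
    intro x
    rw [← hhnorm]
    exact (h.toBCF.norm_coe_le_norm x).trans_eq
      ZeroAtInftyContinuousMap.norm_toBCF_eq_norm
  have key1 : ∀ x, φ (f x) (h x) ≤ φ ((c' : ℝ) : ℂ) 1 := by
    intro x
    by_cases hx : x ∈ V
    · have h1 : ‖f x‖ ≤ ‖((c' : ℝ) : ℂ)‖ := by
        rw [habsc']; exact le_of_lt hx
      have h2 : ‖h x‖ ≤ ‖(1 : ℂ)‖ := by
        simpa using habsh x
      exact ((hinc.1 (f x) ((c' : ℝ) : ℂ) (h x) h1).1).trans
        ((hinc.1 (h x) 1 ((c' : ℝ) : ℂ) h2).2)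
    · have h2 : ‖h x‖ ≤ ‖(((δ / 2 : ℝ)) : ℂ)‖ := by
        rw [Complex.norm_real, Real.norm_eq_abs, abs_of_pos hδ2pos]
        exact le_of_lt (hhsmall x hx)
      have step1 := (hinc.1 (f x) ((‖f‖ : ℝ) : ℂ) (h x) (habsf x)).1
      have step2 := (hinc.1 (h x) (((δ / 2 : ℝ)) : ℂ) ((‖f‖ : ℝ) : ℂ) h2).2
      have : φ ((‖f‖ : ℝ) : ℂ) (((δ / 2 : ℝ)) : ℂ) ≤ g (δ / 2) := le_max_left _ _
      have hlt : φ ((‖f‖ : ℝ) : ℂ) (((δ / 2 : ℝ)) : ℂ) < m := lt_of_le_of_lt this hgδ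
      have := min_le_left (φ ((c' : ℝ) : ℂ) 1) (φ 1 ((c' : ℝ) : ℂ))
      linarith
  have key2 : ∀ x, φ (h x) (f x) ≤ φ 1 ((c' : ℝ) : ℂ) := by
    intro x
    by_cases hx : x ∈ V
    · have h1 : ‖f x‖ ≤ ‖((c' : ℝ) : ℂ)‖ := by
        rw [habsc']; exact le_of_lt hx
      have h2 : ‖h x‖ ≤ ‖(1 : ℂ)‖ := by
        simpa using habsh x
      exact ((hinc.1 (f x) ((c' : ℝ) : ℂ) (h x) h1).2).trans
        ((hinc.1 (h x) 1 ((c' : ℝ) : ℂ) h2).1)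
    · have h2 : ‖h x‖ ≤ ‖(((δ / 2 : ℝ)) : ℂ)‖ := by
        rw [Complex.norm_real, Real.norm_eq_abs, abs_of_pos hδ2pos]
        exact le_of_lt (hhsmall x hx)
      have step1 := (hinc.1 (f x) ((‖f‖ : ℝ) : ℂ) (h x) (habsf x)).2
      have step2 := (hinc.1 (h x) (((δ / 2 : ℝ)) : ℂ) ((‖f‖ : ℝ) : ℂ) h2).1
      have : φ (((δ / 2 : ℝ)) : ℂ) ((‖f‖ : ℝ) : ℂ) ≤ g (δ / 2) := le_max_right _ _
      have hlt : φ (((δ / 2 : ℝ)) : ℂ) ((‖f‖ : ℝ) : ℂ) < m := lt_of_le_of_lt this hgδ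
      have := min_le_right (φ ((c' : ℝ) : ℂ) 1) (φ 1 ((c' : ℝ) : ℂ))
      linarith
  have sup1 : supPhi φ (fun x => f x) (fun x => h x) ≤ φ ((c' : ℝ) : ℂ) 1 :=
    Real.iSup_le (fun x => key1 x) (le_of_lt hpos1)
  have sup2 : supPhi φ (fun x => h x) (fun x => f x) ≤ φ 1 ((c' : ℝ) : ℂ) :=
    Real.iSup_le (fun x => key2 x) (le_of_lt hpos2)
  have hstrict1 : φ ((c' : ℝ) : ℂ) 1 < φ (((a + ε : ℝ)) : ℂ) 1 := by
    refine (hinc.2 ((c' : ℝ) : ℂ) (((a + ε : ℝ)) : ℂ) 1 ?_ one_ne_zero).1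
    rw [habsc', habsc]; exact hc'lt
  have hstrict2 : φ 1 ((c' : ℝ) : ℂ) < φ 1 (((a + ε : ℝ)) : ℂ) := by
    refine (hinc.2 ((c' : ℝ) : ℂ) (((a + ε : ℝ)) : ℂ) 1 ?_ one_ne_zero).2
    rw [habsc', habsc]; exact hc'lt
  rw [rhoPlus, rhoPlusScalar]
  linarith
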